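/- For all integers n ≥ 1 and all m with 1 ≤ m ≤ n, the identity Σ_{k=1}^{n} ((k−1)!(n−k)!/n!)·C(n−m, k−1) = 1/m holds in ℚ. -/

import Mathlib

lemma key_term (n m j : ℕ) (hm1 : 1 ≤ m) (hmn : m ≤ n) (hj : j < n) :
    (j.factorial * (n - 1 - j).factorial : ℚ) / n.factorial * ((n - m).choose j) =
    ((n - 1 - j).choose (m - 1) : ℚ) / (m * n.choose m) := by
  by_cases h : j ≤ n - m
  · have h1 : m - 1 ≤ n - 1 - j := by omega
    have e1 : n - m - j = n - 1 - j - (m - 1) := by omega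
    rw [Nat.cast_choose ℚ h, Nat.cast_choose ℚ h1, Nat.cast_choose ℚ hmn, e1]
    have hm : (m.factorial : ℚ) = m * (m - 1).factorial := by
      obtain ⟨m', rfl⟩ : ∃ m', m = m' + 1 := ⟨m - 1, by omega⟩
      push_cast [Nat.factorial_succ]; ring
    have f1 : (n.factorial : ℚ) ≠ 0 := by positivity
    have f2 : (j.factorial : ℚ) ≠ 0 := by positivity
    have f3 : ((n - 1 - j - (m - 1)).factorial : ℚ) ≠ 0 := by positivity
    have f4 : ((m - 1).factorial : ℚ) ≠ 0 := by positivity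
    have f5 : ((n - m).factorial : ℚ) ≠ 0 := by positivity
    have f6 : (m : ℚ) ≠ 0 := by positivity
    rw [hm]
    field_simp
  · rw [Nat.choose_eq_zero_of_lt (by omega : n - m < j),
      Nat.choose_eq_zero_of_lt (by omega : n - 1 - j < m - 1)]
    simp

theorem stmt_12 (n m : ℕ) (hn : 1 ≤ n) (hm1 : 1 ≤ m) (hmn : m ≤ n) :
    ∑ k ∈ Finset.Icc 1 n,
      ((k - 1).factorial * (n - k).factorial : ℚ) / n.factorial * ((n - m).choose (k - 1)) =
    1 / m := by
  rw [← Finset.Ico_add_one_right_eq_Icc, Finset.sum_Ico_eq_sum_range]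
  have hsum : ∀ j ∈ Finset.range (n + 1 - 1),
      (((1 + j) - 1).factorial * (n - (1 + j)).factorial : ℚ) / n.factorial *
        ((n - m).choose ((1 + j) - 1)) =
      ((n - 1 - j).choose (m - 1) : ℚ) / (m * n.choose m) := by
    intro j hj
    simp only [Finset.mem_range] at hj
    have : (1 + j) - 1 = j := by omega
    rw [this]
    have : n - (1 + j) = n - 1 - j := by omega
    rw [this]
    exact key_term n m j hm1 hmn (by omega)
  rw [Finset.sum_congr rfl hsum, ← Finset.sum_div]
  have hre : ∑ j ∈ Finset.range (n + 1 - 1), ((n - 1 - j).choose (m - 1) : ℚ) =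
      ∑ j ∈ Finset.range n, ((j).choose (m - 1) : ℚ) := by
    have : n + 1 - 1 = n := by omega
    rw [this, ← Finset.sum_range_reflect]
    apply Finset.sum_congr rfl
    intro j hj
    simp only [Finset.mem_range] at hj
    congr 2
    omega
  rw [hre]
  have hnat : ∑ j ∈ Finset.range n, (j).choose (m - 1) = n.choose m := by
    have h1 : ∑ j ∈ Finset.range n, (j).choose (m - 1) =
        ∑ j ∈ Finset.Icc (m - 1) (n - 1), (j).choose (m - 1) := by
      rw [Finset.range_eq_Ico]
      rw [← Finset.Ico_add_one_right_eq_Icc]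
      have : n - 1 + 1 = n := by omega
      rw [this]
      symm
      apply Finset.sum_subset
      · intro x hx
        simp only [Finset.mem_Icc, Finset.mem_Ico] at *
        omega
      · intro x hx hx2
        simp only [Finset.mem_Icc, Finset.mem_Ico] at *
        exact Nat.choose_eq_zero_of_lt (by omega)
    rw [h1, Nat.sum_Icc_choose]
    congr 1 <;> omega
  rw [← Nat.cast_sum, hnat]
  have hc : (n.choose m : ℚ) ≠ 0 := by
    exact_mod_cast Nat.choose_pos hmn |>.ne'
  have hm : (m : ℚ) ≠ 0 := by positivity
  field_simp
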